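/- If E is an end of M, then there exists an end A_0 of M such that the closure of A_0 is contained in E and E \ A_0 is relatively compact in M (i.e., its closure in M is compact). -/

import Mathlib

open Set

/-- An *end* of a topological space `M`: a connected component with noncompact closure
of the complement of some compact set. -/
def IsEnd {M : Type*} [TopologicalSpace M] (E : Set M) : Prop :=
  ∃ K : Set M, IsCompact K ∧ (∃ x ∈ Kᶜ, E = connectedComponentIn Kᶜ x) ∧
    ¬ IsCompact (closure E)

/-- A *domain* in `M`: a nonempty connected open subset. -/
def IsDomainSet {M : Type*} [TopologicalSpace M] (Ω : Set M) : Prop :=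
  IsOpen Ω ∧ IsConnected Ω

/-- `M \ K = E 0 ∪ ⋯ ∪ E (m-1)` is an *ends decomposition*: `K` is compact and the `E j`
are the distinct connected components of `M \ K`, each with noncompact closure. -/
def IsEndsDecomposition {M : Type*} [TopologicalSpace M] (K : Set M)
    {m : ℕ} (E : Fin m → Set M) : Prop :=
  IsCompact K ∧ Function.Injective E ∧
    (∀ j, (∃ x ∈ Kᶜ, E j = connectedComponentIn Kᶜ x) ∧ ¬ IsCompact (closure (E j))) ∧
    (⋃ j, E j) = Kᶜ

/-- A charted space modelled on a locally path-connected space is locally path-connected. -/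
theorem ChartedSpace.locPathConnectedSpace' (H : Type*) [TopologicalSpace H]
    (M : Type*) [TopologicalSpace M] [ChartedSpace H M] [LocallyPathConnectedSpace H] :
    LocallyPathConnectedSpace M := by
  let e : M → OpenPartialHomeomorph M H := chartAt H
  refine LocPathConnectedSpace.of_bases
      (p := fun x s => s ∈ nhds (e x x) ∧ IsPathConnected s ∧ s ⊆ (e x).target)
      (s := fun x s => (e x).symm '' s) ?_ ?_
  · intro x
    rw [← (e x).symm_map_nhds_eq (mem_chart_source H x)]
    exact ((path_connected_basis (e x x)).hasBasis_self_subset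
      ((e x).open_target.mem_nhds (mem_chart_target H x))).map _
  · rintro x s ⟨-, hsconn, hssubset⟩
    exact hsconn.image' ((e x).continuousOn_symm.mono hssubset)

/-- The part of the closure of a connected component of an open set `F` lying inside `F`
is the component itself. -/
theorem closure_connectedComponentIn_inter {M : Type*} [TopologicalSpace M]
    [LocallyConnectedSpace M] {F : Set M} (hF : IsOpen F) (x : M) :
    closure (connectedComponentIn F x) ∩ F ⊆ connectedComponentIn F x := by
  rintro w ⟨hw1, hw2⟩
  have hop : IsOpen (connectedComponentIn F w) := hF.connectedComponentIn
  have hmem : w ∈ connectedComponentIn F w := mem_connectedComponentIn hw2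
  obtain ⟨p, hpw, hpx⟩ := mem_closure_iff.mp hw1 _ hop hmem
  have h1 : connectedComponentIn F x = connectedComponentIn F p := connectedComponentIn_eq hpx
  have h2 : connectedComponentIn F w = connectedComponentIn F p := connectedComponentIn_eq hpw
  rw [h1, ← h2]
  exact hmem

/-- If `E` is an end of `M`, then there is an end `A₀` with `closure A₀ ⊆ E` and
`E \ A₀` relatively compact in `M`. -/
theorem exists_end_with_closure_subset
    {n : ℕ} {M : Type*} [TopologicalSpace M]
    [ChartedSpace (EuclideanSpace ℝ (Fin n)) M]
    [IsManifold (modelWithCornersSelf ℝ (EuclideanSpace ℝ (Fin n))) (⊤ : ℕ∞) M]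
    [T2Space M] [SecondCountableTopology M] [ConnectedSpace M] [NoncompactSpace M]
    (E : Set M) (hE : IsEnd E) :
    ∃ A₀ : Set M, IsEnd A₀ ∧ closure A₀ ⊆ E ∧ IsCompact (closure (E \ A₀)) := by
  classical
  haveI : LocallyCompactSpace M :=
    ChartedSpace.locallyCompactSpace (EuclideanSpace ℝ (Fin n)) M
  haveI : LocallyPathConnectedSpace M :=
    ChartedSpace.locPathConnectedSpace' (EuclideanSpace ℝ (Fin n)) M
  obtain ⟨K, hK, ⟨x, hxK, hEx⟩, hEnc⟩ := hE
  have hoKc : IsOpen Kᶜ := hK.isClosed.isOpen_compl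
  have hEopen : IsOpen E := hEx ▸ hoKc.connectedComponentIn
  have hEsub : E ⊆ Kᶜ := hEx ▸ connectedComponentIn_subset _ _
  have hxE : x ∈ E := hEx ▸ mem_connectedComponentIn hxK
  have hEclin : closure E ∩ Kᶜ ⊆ E := hEx ▸ closure_connectedComponentIn_inter hoKc x
  have hEconn : IsPreconnected E := hEx ▸ isPreconnected_connectedComponentIn
  -- choose compact K' with K ⊆ interior K' and x ∈ K' (so K' is nonempty)
  obtain ⟨K', hK', hKK'⟩ := exists_compact_superset (hK.insert x)
  have hxK' : x ∈ K' := interior_subset (hKK' (mem_insert x K))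
  have hKintK' : K ⊆ interior K' := fun z hz => hKK' (mem_insert_of_mem x hz)
  have hK'c : Kᶜ ⊇ K'ᶜ := compl_subset_compl.mpr (hKintK'.trans interior_subset)
  have hoK'c : IsOpen K'ᶜ := hK'.isClosed.isOpen_compl
  -- choose compact K'' with K' ⊆ interior K''
  obtain ⟨K'', hK'', hK'K''⟩ := exists_compact_superset hK'
  have hK'K''' : K' ⊆ K'' := hK'K''.trans interior_subset
  set comp : M → Set M := fun y => connectedComponentIn K'ᶜ y with hcomp
  -- frontier of K'' is compact and contained in K'ᶜ
  have hfrsub : frontier K'' ⊆ K'ᶜ := fun z hz hzK' => hz.2 (hK'K'' hzK')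
  have hfrc : IsCompact (frontier K'') :=
    hK''.of_isClosed_subset isClosed_frontier
      ((frontier_subset_closure).trans hK''.isClosed.closure_subset)
  -- finitely many components of K'ᶜ meet the frontier of K''
  have hcover : frontier K'' ⊆ ⋃ z ∈ frontier K'', comp z := fun z hz =>
    mem_biUnion hz (mem_connectedComponentIn (hfrsub hz))
  obtain ⟨T, hTsub, hTfin, hTcov⟩ :=
    hfrc.elim_finite_subcover_image (fun z _ => hoK'c.connectedComponentIn) hcover
  have hTfr : ∀ t ∈ T, t ∈ K'ᶜ := fun t ht => hfrsub (hTsub ht)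
  have hTmem : ∀ t ∈ T, t ∈ comp t := fun t ht => mem_connectedComponentIn (hTfr t ht)
  -- any component of K'ᶜ escaping K'' is one of the comp t, t ∈ T
  have escape : ∀ y ∈ K'ᶜ, ¬ (comp y ⊆ K'') → ∃ t ∈ T, comp y = comp t := by
    intro y hy hns
    by_cases hmeet : (comp y ∩ frontier K'').Nonempty
    · obtain ⟨z, hz1, hz2⟩ := hmeet
      have hz3 : z ∈ ⋃ t ∈ T, comp t := hTcov hz2
      simp only [mem_iUnion] at hz3
      obtain ⟨t, htT, hzt⟩ := hz3
      exact ⟨t, htT, (connectedComponentIn_eq hz1).trans (connectedComponentIn_eq hzt).symm⟩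
    · exfalso
      have hsub2 : comp y ⊆ interior K'' ∪ K''ᶜ := by
        intro w hw
        by_cases hwint : w ∈ interior K''
        · exact Or.inl hwint
        · refine Or.inr fun hwK => ?_
          have : w ∈ frontier K'' := by
            rw [hK''.isClosed.frontier_eq]
            exact ⟨hwK, hwint⟩
          exact hmeet ⟨w, hw, this⟩
      have hdisj : Disjoint (interior K'') K''ᶜ :=
        disjoint_compl_right.mono_left interior_subset
      have hcc : comp y ⊆ K''ᶜ := by
        rcases isPreconnected_connectedComponentIn.subset_or_subset isOpen_interior
          hK''.isClosed.isOpen_compl hdisj hsub2 with h | h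
        · exact absurd (h.trans interior_subset) hns
        · exact h
      have hclo : closure (comp y) ⊆ comp y := by
        intro w hw
        have hwa : w ∈ closure (K''ᶜ) := closure_mono hcc hw
        rw [closure_compl] at hwa
        have hwK' : w ∈ K'ᶜ := fun hwK'2 => hwa (hK'K'' hwK'2)
        exact closure_connectedComponentIn_inter hoK'c y ⟨hw, hwK'⟩
      have hne : (comp y).Nonempty := ⟨y, mem_connectedComponentIn hy⟩
      have huniv : comp y = univ :=
        IsClopen.eq_univ ⟨closure_subset_iff_isClosed.mp hclo, hoK'c.connectedComponentIn⟩ hne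
      have : x ∈ comp y := huniv ▸ mem_univ x
      exact (connectedComponentIn_subset _ _ this) hxK'
  -- components of K'ᶜ meeting E lie in E
  have hcompE : ∀ y, y ∈ E → y ∈ K'ᶜ → comp y ⊆ E := by
    intro y hyE hyK'
    have hyE' : y ∈ connectedComponentIn Kᶜ x := hEx ▸ hyE
    rw [hEx, connectedComponentIn_eq hyE']
    exact isPreconnected_connectedComponentIn.subset_connectedComponentIn
      (mem_connectedComponentIn hyK') ((connectedComponentIn_subset _ _).trans hK'c)
  -- the compact "bound" set
  set T' : Set M := {t ∈ T | IsCompact (closure (comp t))} with hT'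
  set B : Set M := K'' ∪ ⋃ t ∈ T', closure (comp t) with hB
  have hBc : IsCompact B :=
    hK''.union ((hTfin.subset (sep_subset _ _)).isCompact_biUnion fun t ht => ht.2)
  set Tbig : Set M := {t ∈ T | comp t ⊆ E ∧ ¬ IsCompact (closure (comp t))} with hTbig
  -- key dichotomy for points of E outside K''
  have hdich : ∀ y ∈ E, y ∉ K'' → (∃ t ∈ Tbig, y ∈ comp t) ∨ y ∈ B := by
    intro y hyE hyK''
    have hyK' : y ∈ K'ᶜ := fun h => hyK'' (hK'K''' h)
    have hyns : ¬ (comp y ⊆ K'') := fun h => hyK'' (h (mem_connectedComponentIn hyK'))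
    obtain ⟨t, htT, hyt⟩ := escape y hyK' hyns
    have hymem : y ∈ comp t := hyt ▸ mem_connectedComponentIn hyK'
    have htE : comp t ⊆ E := hyt ▸ hcompE y hyE hyK'
    by_cases hcptc : IsCompact (closure (comp t))
    · exact Or.inr (Or.inr (mem_biUnion ⟨htT, hcptc⟩ (subset_closure hymem)))
    · exact Or.inl ⟨t, ⟨htT, htE, hcptc⟩, hymem⟩
  -- Tbig is nonempty
  have hTbigne : Tbig.Nonempty := by
    by_contra hne
    rw [not_nonempty_iff_eq_empty] at hne
    have hEB : E ⊆ B := by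
      intro y hyE
      by_cases hyK'' : y ∈ K''
      · exact Or.inl hyK''
      · rcases hdich y hyE hyK'' with ⟨t, ht, -⟩ | h
        · exact absurd (hne ▸ ht) (notMem_empty t)
        · exact h
    exact hEnc (hBc.of_isClosed_subset isClosed_closure (closure_minimal hEB hBc.isClosed))
  obtain ⟨t₀, ht₀⟩ := hTbigne
  have ht₀E : t₀ ∈ E := ht₀.2.1 (hTmem t₀ ht₀.1)
  -- E is path connected
  have hEpath : IsPathConnected E :=
    hEopen.isConnected_iff_isPathConnected.mp ⟨⟨x, hxE⟩, hEconn⟩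
  -- compact path pieces joining t₀ to each t ∈ Tbig, inside E
  set f : M → Set M := fun t =>
    if h : t ∈ E then range (hEpath.joinedIn t₀ ht₀E t h).somePath else ∅ with hf
  have hfE : ∀ t, t ∈ E → f t ⊆ E := by
    intro t ht
    simp only [hf, dif_pos ht]
    rintro - ⟨s, rfl⟩
    exact JoinedIn.somePath_mem _ s
  have hft₀ : ∀ t, t ∈ E → t₀ ∈ f t := by
    intro t ht
    simp only [hf, dif_pos ht]
    exact ⟨0, (hEpath.joinedIn t₀ ht₀E t ht).somePath.source⟩
  have hftt : ∀ t, t ∈ E → t ∈ f t := by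
    intro t ht
    simp only [hf, dif_pos ht]
    exact ⟨1, (hEpath.joinedIn t₀ ht₀E t ht).somePath.target⟩
  have hfcomp : ∀ t, t ∈ E → IsCompact (f t) := by
    intro t ht
    simp only [hf, dif_pos ht]
    exact isCompact_range (hEpath.joinedIn t₀ ht₀E t ht).somePath.continuous
  have hfconn : ∀ t, t ∈ E → IsPreconnected (f t) := by
    intro t ht
    simp only [hf, dif_pos ht]
    exact isPreconnected_range (hEpath.joinedIn t₀ ht₀E t ht).somePath.continuous
  have hTbigE : ∀ t ∈ Tbig, t ∈ E := fun t ht => ht.2.1 (hTmem t ht.1)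
  set P : Set M := ⋃ t ∈ Tbig, f t with hP
  have hPcomp : IsCompact P :=
    (hTfin.subset (sep_subset _ _)).isCompact_biUnion fun t ht => hfcomp t (hTbigE t ht)
  have hPE : P ⊆ E := by
    intro y hy
    simp only [hP, mem_iUnion] at hy
    obtain ⟨t, ht, hyt⟩ := hy
    exact hfE t (hTbigE t ht) hyt
  -- compact Lc with P ⊆ interior Lc, Lc ⊆ E
  obtain ⟨Lc, hLc, hPLc, hLcE⟩ := exists_compact_between hPcomp hEopen hPE
  set L₀ : Set M := K' \ interior Lc with hL₀def
  have hL₀ : IsCompact L₀ := hK'.diff isOpen_interior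
  set S : Set M := P ∪ ⋃ t ∈ Tbig, comp t with hS
  have ht₀P : t₀ ∈ P := mem_biUnion ht₀ (hftt t₀ ht₀E)
  have ht₀S : t₀ ∈ S := Or.inl ht₀P
  have hSL₀ : S ⊆ L₀ᶜ := by
    rintro y (hy | hy)
    · exact fun h => h.2 (hPLc hy)
    · simp only [mem_iUnion] at hy
      obtain ⟨t, ht, hyt⟩ := hy
      exact fun h => (connectedComponentIn_subset _ _ hyt) h.1
  have hSconn : IsPreconnected S := by
    apply isPreconnected_of_forall t₀
    rintro y (hy | hy)
    · simp only [hP, mem_iUnion] at hy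
      obtain ⟨t, ht, hyt⟩ := hy
      exact ⟨f t, fun z hz => Or.inl (mem_biUnion ht hz),
        hft₀ t (hTbigE t ht), hyt, hfconn t (hTbigE t ht)⟩
    · simp only [mem_iUnion] at hy
      obtain ⟨t, ht, hyt⟩ := hy
      have htE : t ∈ E := hTbigE t ht
      refine ⟨f t ∪ comp t, ?_, Or.inl (hft₀ t htE), Or.inr hyt, ?_⟩
      · rintro z (hz | hz)
        · exact Or.inl (mem_biUnion ht hz)
        · exact Or.inr (mem_biUnion ht hz)
      · exact (hfconn t htE).union t (hftt t htE) (hTmem t ht.1) isPreconnected_connectedComponentIn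
  set A₀ : Set M := connectedComponentIn L₀ᶜ t₀ with hA₀def
  have hSA : S ⊆ A₀ := hSconn.subset_connectedComponentIn ht₀S hSL₀
  have hA₀sub : A₀ ⊆ K'ᶜ ∪ Lc := by
    intro y hy
    have : y ∈ L₀ᶜ := connectedComponentIn_subset _ _ hy
    by_cases hyK' : y ∈ K'
    · exact Or.inr (interior_subset (by
        by_contra h
        exact this ⟨hyK', h⟩))
    · exact Or.inl hyK'
  have hA₀Kc : A₀ ⊆ Kᶜ := fun y hy => by
    rcases hA₀sub hy with h | h
    · exact hK'c h
    · exact hEsub (hLcE h)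
  have ht₀A : t₀ ∈ A₀ := hSA ht₀S
  have hA₀E : A₀ ⊆ E := by
    have ht₀E' : t₀ ∈ connectedComponentIn Kᶜ x := hEx ▸ ht₀E
    rw [hEx, connectedComponentIn_eq ht₀E']
    exact isPreconnected_connectedComponentIn.subset_connectedComponentIn
      ht₀A hA₀Kc
  have hclA₀E : closure A₀ ⊆ E := by
    intro y hy
    have h1 : y ∈ closure E := closure_mono hA₀E hy
    have h2 : y ∈ closure (K'ᶜ ∪ Lc) := closure_mono hA₀sub hy
    rw [closure_union, closure_compl] at h2
    have h3 : y ∈ Kᶜ := by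
      rcases h2 with h | h
      · exact fun hyK => h (hKintK' hyK)
      · exact hEsub (hLcE (hLc.isClosed.closure_subset h))
    exact hEclin ⟨h1, h3⟩
  have ht₀L₀ : t₀ ∈ L₀ᶜ := fun h => (hTfr t₀ ht₀.1) h.1
  have hA₀nc : ¬ IsCompact (closure A₀) := by
    intro hcl
    have hsub : comp t₀ ⊆ A₀ := fun z hz => hSA (Or.inr (mem_biUnion ht₀ hz))
    exact ht₀.2.2 (hcl.of_isClosed_subset isClosed_closure (closure_mono hsub))
  refine ⟨A₀, ⟨L₀, hL₀, ⟨t₀, ht₀L₀, rfl⟩, hA₀nc⟩, hclA₀E, ?_⟩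
  have hEAB : E \ A₀ ⊆ B := by
    rintro y ⟨hyE, hyA⟩
    by_cases hyK'' : y ∈ K''
    · exact Or.inl hyK''
    · rcases hdich y hyE hyK'' with ⟨t, ht, hyt⟩ | h
      · exact absurd (hSA (Or.inr (mem_biUnion ht hyt))) hyA
      · exact h
  exact hBc.of_isClosed_subset isClosed_closure (closure_minimal hEAB hBc.isClosed)
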